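/- A (2-)permutation of [n] is separable if and only if it avoids the patterns 2413 and 3142. -/
import Mathlib


/-- `P` is a `d`-permutation: a sequence of `d` permutations of `[n]`
whose first entry is the identity. -/
def IsDPerm {d n : ℕ} (P : Fin d → Equiv.Perm (Fin n)) : Prop :=
  ∀ h : 0 < d, P ⟨0, h⟩ = 1

/-- Separability of the restriction of the `d` rows `P` to the block of
columns `[a, b)`: either the block consists of a single column, or it can be
split into two consecutive sub-blocks such that in each row all entries of one
sub-block are smaller than all entries of the other, and both sub-blocks are
themselves separable. -/
inductive SepOn {d : ℕ} (P : Fin d → ℕ → ℕ) : ℕ → ℕ → Prop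
  | single (a : ℕ) : SepOn P a (a + 1)
  | split (a l b : ℕ) (h1 : a < l) (h2 : l < b)
      (hmono : ∀ i : Fin d,
        (∀ j1 j2, a ≤ j1 → j1 < l → l ≤ j2 → j2 < b → P i j1 < P i j2) ∨
        (∀ j1 j2, a ≤ j1 → j1 < l → l ≤ j2 → j2 < b → P i j2 < P i j1))
      (hL : SepOn P a l) (hR : SepOn P l b) : SepOn P a b

/-- The rows of a `d`-permutation, as functions `ℕ → ℕ`. -/
def dPermRows {d n : ℕ} (P : Fin d → Equiv.Perm (Fin n)) : Fin d → ℕ → ℕ :=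
  fun i j => if h : j < n then (P i ⟨j, h⟩ : ℕ) else 0

/-- A `d`-permutation of `[n]` is separable if its full block of columns is
recursively separable. -/
def IsSepDPerm {d n : ℕ} (P : Fin d → Equiv.Perm (Fin n)) : Prop :=
  SepOn (dPermRows P) 0 n


/-- `π` contains the pattern `σ` (a permutation of `{0,1,2,3}`, given as a
function): there are four positions, in increasing order, on which the values
of `π` are in the same relative order as the values of `σ`. -/
def ContainsPat {n : ℕ} (π : Equiv.Perm (Fin n)) (σ : Fin 4 → Fin 4) : Prop :=
  ∃ c : Fin 4 → Fin n, StrictMono c ∧ ∀ j k : Fin 4, σ j < σ k ↔ π (c j) < π (c k)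

/- ======================= auxiliary machinery ======================= -/

/-- An occurrence of the pattern 2413 (ranks of values at `c0<c1<c2<c3` are 2,4,1,3)
inside columns `[a, b)`. -/
def Pat2413 (f : ℕ → ℕ) (a b : ℕ) : Prop :=
  ∃ c0 c1 c2 c3 : ℕ, a ≤ c0 ∧ c0 < c1 ∧ c1 < c2 ∧ c2 < c3 ∧ c3 < b ∧
    f c2 < f c0 ∧ f c0 < f c3 ∧ f c3 < f c1

/-- An occurrence of the pattern 3142 inside columns `[a, b)`. -/
def Pat3142 (f : ℕ → ℕ) (a b : ℕ) : Prop :=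
  ∃ c0 c1 c2 c3 : ℕ, a ≤ c0 ∧ c0 < c1 ∧ c1 < c2 ∧ c2 < c3 ∧ c3 < b ∧
    f c1 < f c3 ∧ f c3 < f c0 ∧ f c0 < f c2

lemma pat2413_mono {f : ℕ → ℕ} {a b a' b' : ℕ} (ha : a ≤ a') (hb : b' ≤ b)
    (h : Pat2413 f a' b') : Pat2413 f a b := by
  obtain ⟨c0, c1, c2, c3, h0, h1, h2, h3, h4, h5, h6, h7⟩ := h
  exact ⟨c0, c1, c2, c3, by omega, h1, h2, h3, by omega, h5, h6, h7⟩

lemma pat3142_mono {f : ℕ → ℕ} {a b a' b' : ℕ} (ha : a ≤ a') (hb : b' ≤ b)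
    (h : Pat3142 f a' b') : Pat3142 f a b := by
  obtain ⟨c0, c1, c2, c3, h0, h1, h2, h3, h4, h5, h6, h7⟩ := h
  exact ⟨c0, c1, c2, c3, by omega, h1, h2, h3, by omega, h5, h6, h7⟩

/-- A separable block contains neither 2413 nor 3142 in any of its rows. -/
lemma sepOn_no_pat {d : ℕ} {P : Fin d → ℕ → ℕ} (i : Fin d) {a b : ℕ}
    (h : SepOn P a b) :
    ∀ c0 c1 c2 c3 : ℕ, a ≤ c0 → c0 < c1 → c1 < c2 → c2 < c3 → c3 < b →
      ((P i c2 < P i c0 ∧ P i c0 < P i c3 ∧ P i c3 < P i c1) ∨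
       (P i c1 < P i c3 ∧ P i c3 < P i c0 ∧ P i c0 < P i c2)) → False := by
  induction h with
  | single a => intro c0 c1 c2 c3 h0 h1 h2 h3 h4 _; omega
  | split a l b h1 h2 hmono hL hR ihL ihR =>
    intro c0 c1 c2 c3 hc0 hc1 hc2 hc3 hc4 hpat
    by_cases hl : c3 < l
    · exact ihL c0 c1 c2 c3 hc0 hc1 hc2 hc3 hl hpat
    by_cases hr : l ≤ c0
    · exact ihR c0 c1 c2 c3 hr hc1 hc2 hc3 hc4 hpat
    push_neg at hl hr
    rcases hmono i with hs | hs
    · rcases hpat with ⟨p1, p2, p3⟩ | ⟨p1, p2, p3⟩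
      · by_cases h1l : c1 < l
        · have := hs c1 c3 (by omega) h1l hl hc4
          omega
        · have := hs c0 c2 hc0 hr (by omega) (by omega)
          omega
      · have := hs c0 c3 hc0 hr hl hc4
        omega
    · rcases hpat with ⟨p1, p2, p3⟩ | ⟨p1, p2, p3⟩
      · have := hs c0 c3 hc0 hr hl hc4
        omega
      · by_cases h1l : c1 < l
        · have := hs c1 c3 (by omega) h1l hl hc4
          omega
        · have := hs c0 c2 hc0 hr (by omega) (by omega)
          omega

/-- The hole-walking lemma.  Fixed data: a function `f` injective on `[a,b)`, a
threshold `mval`, a position `p ∈ [a,b)` carrying a value below `mval`, and the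
knowledge (`hni`) that no prefix `[a, l')` (for `l' ≥ l0`) of the block is an
interval of values.  Walking state: a prefix `[a, l)` containing all block values
in `[mval, f q)` and nothing below `mval`, a "hole" at position `q ≥ l`, and a
position `bb ∈ (a, l)` with `f bb > f q > f a ≥ mval`.  Conclusion: 2413 occurs. -/
lemma walk (f : ℕ → ℕ) (a b mval p l0 : ℕ)
    (inj : ∀ r s, a ≤ r → r < b → a ≤ s → s < b → f r = f s → r = s)
    (hp1 : a ≤ p) (hp2 : p < b) (hp3 : f p < mval)
    (hni : ∀ l', l0 ≤ l' → l' < b → ∃ r1 r2 r3 : ℕ,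
      a ≤ r1 ∧ r1 < l' ∧ a ≤ r2 ∧ r2 < l' ∧ l' ≤ r3 ∧ r3 < b ∧
      f r1 < f r3 ∧ f r3 < f r2) :
    ∀ k l q bb, b - l ≤ k → a < l → l0 ≤ l → l ≤ q → q < b → a < bb → bb < l →
      mval ≤ f a → f a < f q → f q < f bb →
      (∀ r, a ≤ r → r < l → mval ≤ f r) →
      (∀ r, l ≤ r → r < b → mval ≤ f r → f r < f q → False) →
      Pat2413 f a b := by
  intro k
  induction k with
  | zero => intro l q bb hk hal hl0 hlq hqb; omega
  | succ k ih =>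
    intro l q bb hk hal hl0 hlq hqb habb hbbl hfa hfaq hqbb hlow hcover
    by_cases hA : ∃ r, l ≤ r ∧ r < q ∧ f r < mval
    · obtain ⟨r, hr1, hr2, hr3⟩ := hA
      exact ⟨a, bb, r, q, le_refl a, habb, by omega, hr2, hqb,
        by omega, hfaq, hqbb⟩
    · push_neg at hA
      have hpq1 : q + 1 ≤ p := by
        rcases lt_or_ge p l with h | h
        · exact absurd (hlow p hp1 h) (by omega)
        rcases lt_or_ge p q with h' | h'
        · exact absurd (hA p h h') (by omega)
        rcases eq_or_lt_of_le h' with h'' | h''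
        · exfalso; rw [h''] at hfaq; omega
        · omega
      obtain ⟨r1, r2, r3, hr1a, hr1l, hr2a, hr2l, hr3l, hr3b, hf13, hf32⟩ :=
        hni (q + 1) (by omega) (by omega)
      have hr1low : mval ≤ f r1 := by
        rcases lt_or_ge r1 l with h | h
        · exact hlow r1 hr1a h
        rcases lt_or_ge r1 q with h' | h'
        · exact hA r1 h h'
        · have : r1 = q := by omega
          subst this; omega
      have hr3low : mval ≤ f r3 := by omega
      obtain ⟨q2, hq2mem, hq2min⟩ := Finset.exists_min_image
        ((Finset.Ico (q + 1) b).filter fun r => mval ≤ f r) f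
        ⟨r3, by simp [Finset.mem_filter, Finset.mem_Ico]; omega⟩
      simp only [Finset.mem_filter, Finset.mem_Ico] at hq2mem
      obtain ⟨⟨hq2l, hq2b⟩, hq2low⟩ := hq2mem
      have hq2r3 : f q2 ≤ f r3 := hq2min r3 (by
        simp [Finset.mem_filter, Finset.mem_Ico]; omega)
      have hfqq2 : f q < f q2 := by
        have hne : f q2 ≠ f q := fun h =>
          absurd (inj q2 q (by omega) hq2b (by omega) hqb h) (by omega)
        rcases lt_or_ge (f q2) (f q) with h | h
        · exact absurd (hcover q2 (by omega) hq2b hq2low h) (fun x => x)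
        · omega
      have hr2a' : a < r2 := by
        rcases eq_or_lt_of_le hr2a with h | h
        · exfalso; rw [← h] at hf32; omega
        · exact h
      refine ih (q + 1) q2 r2 (by omega) (by omega) (by omega) hq2l hq2b hr2a'
        (by omega) hfa (by omega) (by omega) ?_ ?_
      · intro r hra hrl
        rcases lt_or_ge r l with h | h
        · exact hlow r hra h
        rcases lt_or_ge r q with h' | h'
        · exact hA r h h'
        · have : r = q := by omega
          subst this; omega
      · intro r hrl hrb hrlow hrlt
        have := hq2min r (by simp [Finset.mem_filter, Finset.mem_Ico]; omega)
        omega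

/-- From a maximal interval prefix `[a, l1)` all of whose values lie below
`f l1`, together with a position `s ≥ l1` whose value lies below the whole
prefix, we extract a 2413 pattern. -/
lemma key_pos (f : ℕ → ℕ) (a b l1 : ℕ)
    (inj : ∀ r s, a ≤ r → r < b → a ≤ s → s < b → f r = f s → r = s)
    (hl1 : a < l1) (hl2 : l1 < b)
    (hVint : ∀ r1 r2 r3, a ≤ r1 → r1 < l1 → a ≤ r2 → r2 < l1 → l1 ≤ r3 → r3 < b →
      f r1 < f r3 → f r3 < f r2 → False)
    (hmax : ∀ l', l1 < l' → l' < b → ∃ r1 r2 r3 : ℕ,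
      a ≤ r1 ∧ r1 < l' ∧ a ≤ r2 ∧ r2 < l' ∧ l' ≤ r3 ∧ r3 < b ∧
      f r1 < f r3 ∧ f r3 < f r2)
    (hpos : ∀ r, a ≤ r → r < l1 → f r < f l1)
    (s : ℕ) (hs1 : l1 ≤ s) (hs2 : s < b)
    (hs3 : ∀ r, a ≤ r → r < l1 → f s < f r) :
    Pat2413 f a b := by
  obtain ⟨amin, hamin_mem, hamin⟩ := Finset.exists_min_image (Finset.Ico a l1) f
    ⟨a, by simp [Finset.mem_Ico]; omega⟩
  simp only [Finset.mem_Ico] at hamin_mem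
  have hamin' : ∀ r, a ≤ r → r < l1 → f amin ≤ f r := fun r h1 h2 =>
    hamin r (by simp [Finset.mem_Ico]; omega)
  have hsmin : f s < f amin := hs3 amin hamin_mem.1 hamin_mem.2
  have hsa : f s < f a := hs3 a (le_refl a) hl1
  have hsl1' : s ≠ l1 := by
    intro h; subst h
    exact absurd (hpos a (le_refl a) hl1) (by omega)
  have hl1b : l1 + 1 < b := by omega
  obtain ⟨r1, r2, r3, hr1a, hr1l, hr2a, hr2l, hr3l, hr3b, hf13, hf32⟩ :=
    hmax (l1 + 1) (by omega) hl1b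
  have hr2eq : r2 = l1 := by
    by_contra hne
    have hr2lt : r2 < l1 := by omega
    rcases eq_or_lt_of_le (show r1 ≤ l1 by omega) with h | h
    · have := hpos r2 hr2a hr2lt
      rw [h] at hf13; omega
    · exact hVint r1 r2 r3 hr1a h hr2a hr2lt (by omega) hr3b hf13 hf32
  rw [hr2eq] at hf32
  have hr1lt : r1 < l1 := by
    rcases eq_or_lt_of_le (show r1 ≤ l1 by omega) with h | h
    · rw [h] at hf13; omega
    · exact h
  have hr3low : f amin ≤ f r3 := le_trans (hamin' r1 hr1a hr1lt) (le_of_lt hf13)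
  obtain ⟨q, hqmem, hqmin⟩ := Finset.exists_min_image
    ((Finset.Ico (l1 + 1) b).filter fun r => f amin ≤ f r) f
    ⟨r3, by simp [Finset.mem_filter, Finset.mem_Ico]; omega⟩
  simp only [Finset.mem_filter, Finset.mem_Ico] at hqmem
  obtain ⟨⟨hql, hqb⟩, hqlow⟩ := hqmem
  have hqr3 : f q ≤ f r3 := hqmin r3 (by
    simp [Finset.mem_filter, Finset.mem_Ico]; omega)
  have hqgt : ∀ r, a ≤ r → r < l1 → f r < f q := by
    intro r hra hrl
    have hne : f q ≠ f r := fun h =>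
      absurd (inj q r (by omega) hqb hra (by omega) h) (by omega)
    by_contra hcon
    have hqr : f q < f r := by omega
    rcases eq_or_lt_of_le hqlow with h | h
    · have : amin = q := inj amin q (by omega) (by omega) (by omega) hqb h
      omega
    · have hne2 : amin ≠ r := by
        intro h'; rw [h'] at h
        exact absurd (hamin' r hra hrl) (by omega)
      exact hVint amin r q (by omega) hamin_mem.2 hra hrl (by omega) hqb h hqr
  exact walk f a b (f amin) s (l1 + 1) inj (by omega) hs2 hsmin
    (fun l' h1 h2 => hmax l' (by omega) h2)
    (b - (l1 + 1)) (l1 + 1) q l1 (le_refl _) (by omega) (le_refl _) hql hqb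
    hl1 (by omega) (hamin' a (le_refl a) hl1) (hqgt a (le_refl a) hl1)
    (by omega)
    (by
      intro r hra hrl
      rcases lt_or_ge r l1 with h | h
      · exact hamin' r hra h
      · have : r = l1 := by omega
        subst this
        have := hpos a (le_refl a) hl1
        have := hamin' a (le_refl a) hl1
        omega)
    (by
      intro r hrl hrb hrlow hrlt
      have := hqmin r (by simp [Finset.mem_filter, Finset.mem_Ico]; omega)
      omega)

/-- Key splitting lemma: a pattern-free block of length ≥ 2 splits. -/
lemma key (f : ℕ → ℕ) (a b : ℕ)
    (inj : ∀ r s, a ≤ r → r < b → a ≤ s → s < b → f r = f s → r = s)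
    (hab : a + 1 < b)
    (h24 : ¬ Pat2413 f a b) (h31 : ¬ Pat3142 f a b) :
    ∃ l, a < l ∧ l < b ∧
      ((∀ r s, a ≤ r → r < l → l ≤ s → s < b → f r < f s) ∨
       (∀ r s, a ≤ r → r < l → l ≤ s → s < b → f s < f r)) := by
  classical
  let Vint : ℕ → Prop := fun l => a < l ∧
    ∀ r1 r2 r3, a ≤ r1 → r1 < l → a ≤ r2 → r2 < l → l ≤ r3 → r3 < b →
      f r1 < f r3 → f r3 < f r2 → False
  have hbase : Vint (a + 1) := by
    refine ⟨by omega, ?_⟩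
    intro r1 r2 r3 h1 h2 h3 h4 h5 h6 h7 h8
    have e1 : r1 = a := by omega
    have e2 : r2 = a := by omega
    rw [e1] at h7
    rw [e2] at h8
    omega
  set l1 := Nat.findGreatest Vint (b - 1) with hl1def
  have hl1ge : a + 1 ≤ l1 := Nat.le_findGreatest (by omega) hbase
  have hl1spec : Vint l1 := Nat.findGreatest_spec (P := Vint) (by omega) hbase
  have hl1le : l1 ≤ b - 1 := Nat.findGreatest_le (b - 1)
  obtain ⟨hal1, hVint⟩ := hl1spec
  have hl1b : l1 < b := by omega
  have hmax : ∀ l', l1 < l' → l' < b → ∃ r1 r2 r3 : ℕ,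
      a ≤ r1 ∧ r1 < l' ∧ a ≤ r2 ∧ r2 < l' ∧ l' ≤ r3 ∧ r3 < b ∧
      f r1 < f r3 ∧ f r3 < f r2 := by
    intro l' h1 h2
    by_contra hno
    push_neg at hno
    have hv : Vint l' := by
      refine ⟨by omega, ?_⟩
      intro r1 r2 r3 ha1 ha2 ha3 ha4 ha5 ha6 ha7 ha8
      have := hno r1 r2 r3 ha1 ha2 ha3 ha4 ha5 ha6 ha7
      omega
    exact Nat.findGreatest_is_greatest h1 (by omega) hv
  by_cases hsep : (∀ r s, a ≤ r → r < l1 → l1 ≤ s → s < b → f r < f s) ∨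
      (∀ r s, a ≤ r → r < l1 → l1 ≤ s → s < b → f s < f r)
  · exact ⟨l1, hal1, hl1b, hsep⟩
  push_neg at hsep
  obtain ⟨hns1, hns2⟩ := hsep
  obtain ⟨r, s, hra, hrl, hsl, hsb, hrs⟩ := hns1
  obtain ⟨r', s', hra', hrl', hsl', hsb', hrs'⟩ := hns2
  have hfsr : f s < f r := by
    have : f s ≠ f r := fun h =>
      absurd (inj s r (by omega) hsb hra (by omega) h) (by omega)
    omega
  have hfrs' : f r' < f s' := by
    have : f s' ≠ f r' := fun h =>
      absurd (inj s' r' (by omega) hsb' hra' (by omega) h) (by omega)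
    omega
  have hslow : ∀ r'', a ≤ r'' → r'' < l1 → f s < f r'' := by
    intro r'' h1 h2
    have : f r'' ≠ f s := fun h =>
      absurd (inj r'' s h1 (by omega) (by omega) hsb h) (by omega)
    by_contra hcon
    exact hVint r'' r s h1 h2 hra hrl hsl hsb (by omega) hfsr
  have hshigh : ∀ r'', a ≤ r'' → r'' < l1 → f r'' < f s' := by
    intro r'' h1 h2
    have : f r'' ≠ f s' := fun h =>
      absurd (inj r'' s' h1 (by omega) (by omega) hsb' h) (by omega)
    by_contra hcon
    exact hVint r' r'' s' hra' hrl' h1 h2 hsl' hsb' hfrs' (by omega)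
  by_cases hside : ∀ r, a ≤ r → r < l1 → f r < f l1
  · exact absurd (key_pos f a b l1 inj hal1 hl1b hVint hmax hside s hsl hsb hslow) h24
  · push_neg at hside
    obtain ⟨r0, hr0a, hr0l, hr0f⟩ := hside
    have hfl1r0 : f l1 < f r0 := by
      have : f l1 ≠ f r0 := fun h =>
        absurd (inj l1 r0 (by omega) hl1b hr0a (by omega) h) (by omega)
      omega
    have hneg : ∀ r, a ≤ r → r < l1 → f l1 < f r := by
      intro r'' h1 h2
      have : f r'' ≠ f l1 := fun h =>
        absurd (inj r'' l1 h1 (by omega) (by omega) hl1b h) (by omega)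
      by_contra hcon
      exact hVint r'' r0 l1 h1 h2 hr0a hr0l (le_refl l1) hl1b (by omega) hfl1r0
    -- complement trick
    set C := (Finset.Ico a b).sup f + 1 with hCdef
    have hC : ∀ r, a ≤ r → r < b → f r < C := by
      intro r'' h1 h2
      have := Finset.le_sup (f := f) (show r'' ∈ Finset.Ico a b by
        simp [Finset.mem_Ico]; omega)
      omega
    set g : ℕ → ℕ := fun x => C - f x with hgdef
    have hg : ∀ r r', a ≤ r → r < b → a ≤ r' → r' < b → (g r < g r' ↔ f r' < f r) := by
      intro rr rr' h1 h2 h3 h4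
      have := hC rr h1 h2
      have := hC rr' h3 h4
      simp only [hgdef]
      omega
    have hPat : Pat2413 g a b := by
      apply key_pos g a b l1 _ hal1 hl1b _ _ _ s' hsl' hsb' _
      · intro rr ss h1 h2 h3 h4 h
        have := hC rr h1 h2
        have := hC ss h3 h4
        have h' : f rr = f ss := by simp only [hgdef] at h; omega
        exact inj rr ss h1 h2 h3 h4 h'
      · intro r1 r2 r3 h1 h2 h3 h4 h5 h6 h7 h8
        rw [hg r1 r3 (by omega) (by omega) (by omega) (by omega)] at h7
        rw [hg r3 r2 (by omega) (by omega) (by omega) (by omega)] at h8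
        exact hVint r2 r1 r3 h3 h4 h1 h2 h5 h6 h8 h7
      · intro l' h1 h2
        obtain ⟨r1, r2, r3, ha1, ha2, ha3, ha4, ha5, ha6, ha7, ha8⟩ := hmax l' h1 h2
        refine ⟨r2, r1, r3, ha3, ha4, ha1, ha2, ha5, ha6, ?_, ?_⟩
        · rw [hg r2 r3 (by omega) (by omega) (by omega) (by omega)]; exact ha8
        · rw [hg r3 r1 (by omega) (by omega) (by omega) (by omega)]; exact ha7
      · intro r'' h1 h2
        rw [hg r'' l1 (by omega) (by omega) (by omega) (by omega)]
        exact hneg r'' h1 h2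
      · intro r'' h1 h2
        rw [hg s' r'' (by omega) (by omega) (by omega) (by omega)]
        exact hshigh r'' h1 h2
    obtain ⟨c0, c1, c2, c3, k0, k1, k2, k3, k4, k5, k6, k7⟩ := hPat
    rw [hg c2 c0 (by omega) (by omega) (by omega) (by omega)] at k5
    rw [hg c0 c3 (by omega) (by omega) (by omega) (by omega)] at k6
    rw [hg c3 c1 (by omega) (by omega) (by omega) (by omega)] at k7
    exact absurd ⟨c0, c1, c2, c3, k0, k1, k2, k3, k4, k7, k6, k5⟩ h31

/-- Building separability from pattern avoidance, by strong induction on the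
size of the block. -/
lemma sep_build (P : Fin 2 → ℕ → ℕ) :
    ∀ k a b, a < b → b - a ≤ k →
      (∀ j1 j2, j1 < j2 → j2 < b → P 0 j1 < P 0 j2) →
      (∀ r s, a ≤ r → r < b → a ≤ s → s < b → P 1 r = P 1 s → r = s) →
      ¬ Pat2413 (P 1) a b → ¬ Pat3142 (P 1) a b →
      SepOn P a b := by
  intro k
  induction k with
  | zero => intro a b hab hk; omega
  | succ k ih =>
    intro a b hab hk h0 inj h24 h31
    rcases eq_or_lt_of_le (show a + 1 ≤ b from hab) with hb | hb
    · rw [← hb]; exact SepOn.single a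
    · obtain ⟨l, hl1, hl2, hsepl⟩ := key (P 1) a b inj hb h24 h31
      refine SepOn.split a l b hl1 hl2 ?_ ?_ ?_
      · intro i
        match i with
        | 0 => exact Or.inl fun j1 j2 hj1 hj2 hj3 hj4 => h0 j1 j2 (by omega) (by omega)
        | 1 =>
          rcases hsepl with h | h
          · exact Or.inl fun j1 j2 hj1 hj2 hj3 hj4 => h j1 j2 hj1 hj2 hj3 hj4
          · exact Or.inr fun j1 j2 hj1 hj2 hj3 hj4 => h j1 j2 hj1 hj2 hj3 hj4
      · exact ih a l hl1 (by omega)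
          (fun j1 j2 h1 h2 => h0 j1 j2 h1 (by omega))
          (fun r s h1 h2 h3 h4 => inj r s h1 (by omega) h3 (by omega))
          (fun h => h24 (pat2413_mono (le_refl a) (by omega) h))
          (fun h => h31 (pat3142_mono (le_refl a) (by omega) h))
      · exact ih l b hl2 (by omega) h0
          (fun r s h1 h2 h3 h4 => inj r s (by omega) h2 (by omega) h4)
          (fun h => h24 (pat2413_mono (by omega) (le_refl b) h))
          (fun h => h31 (pat3142_mono (by omega) (le_refl b) h))

/-- A permutation is separable iff it avoids the patterns `2413` and `3142`. -/
theorem sep_iff_avoids (n : ℕ) (hn : 1 ≤ n) (π : Equiv.Perm (Fin n)) :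
    IsSepDPerm ![1, π] ↔
      ¬ ContainsPat π ![1, 3, 0, 2] ∧ ¬ ContainsPat π ![2, 0, 3, 1] := by
  have hrow : ∀ m (hm : m < n), dPermRows ![1, π] 1 m = (π ⟨m, hm⟩ : ℕ) := by
    intro m hm
    simp [dPermRows, hm]
  have hrow0 : ∀ m, m < n → dPermRows ![1, π] 0 m = m := by
    intro m hm
    simp [dPermRows, hm]
  constructor
  · intro hsep
    constructor
    · rintro ⟨c, hc, hiff⟩
      have h20 : π (c 2) < π (c 0) := (hiff 2 0).mp (by decide)
      have h03 : π (c 0) < π (c 3) := (hiff 0 3).mp (by decide)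
      have h31 : π (c 3) < π (c 1) := (hiff 3 1).mp (by decide)
      refine sepOn_no_pat (d := 2) 1 hsep (c 0) (c 1) (c 2) (c 3)
        (Nat.zero_le _) (hc (by decide)) (hc (by decide)) (hc (by decide))
        (c 3).isLt (Or.inl ⟨?_, ?_, ?_⟩)
      · rw [hrow _ (c 2).isLt, hrow _ (c 0).isLt, Fin.eta, Fin.eta]
        exact h20
      · rw [hrow _ (c 0).isLt, hrow _ (c 3).isLt, Fin.eta, Fin.eta]
        exact h03
      · rw [hrow _ (c 3).isLt, hrow _ (c 1).isLt, Fin.eta, Fin.eta]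
        exact h31
    · rintro ⟨c, hc, hiff⟩
      have h13 : π (c 1) < π (c 3) := (hiff 1 3).mp (by decide)
      have h30 : π (c 3) < π (c 0) := (hiff 3 0).mp (by decide)
      have h02 : π (c 0) < π (c 2) := (hiff 0 2).mp (by decide)
      refine sepOn_no_pat (d := 2) 1 hsep (c 0) (c 1) (c 2) (c 3)
        (Nat.zero_le _) (hc (by decide)) (hc (by decide)) (hc (by decide))
        (c 3).isLt (Or.inr ⟨?_, ?_, ?_⟩)
      · rw [hrow _ (c 1).isLt, hrow _ (c 3).isLt, Fin.eta, Fin.eta]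
        exact h13
      · rw [hrow _ (c 3).isLt, hrow _ (c 0).isLt, Fin.eta, Fin.eta]
        exact h30
      · rw [hrow _ (c 0).isLt, hrow _ (c 2).isLt, Fin.eta, Fin.eta]
        exact h02
  · rintro ⟨h1, h2⟩
    have inj : ∀ r s, 0 ≤ r → r < n → 0 ≤ s → s < n →
        dPermRows ![1, π] 1 r = dPermRows ![1, π] 1 s → r = s := by
      intro r s _ hr _ hs h
      rw [hrow r hr, hrow s hs] at h
      have h' : π ⟨r, hr⟩ = π ⟨s, hs⟩ := Fin.val_injective h
      exact congrArg Fin.val (π.injective h')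
    have h24 : ¬ Pat2413 (dPermRows ![1, π] 1) 0 n := by
      rintro ⟨c0, c1, c2, c3, _, hc01, hc12, hc23, hc3n, p1, p2, p3⟩
      apply h1
      have hb0 : c0 < n := by omega
      have hb1 : c1 < n := by omega
      have hb2 : c2 < n := by omega
      have hb3 : c3 < n := by omega
      rw [hrow c2 hb2, hrow c0 hb0] at p1
      rw [hrow c0 hb0, hrow c3 hb3] at p2
      rw [hrow c3 hb3, hrow c1 hb1] at p3
      refine ⟨![⟨c0, hb0⟩, ⟨c1, hb1⟩, ⟨c2, hb2⟩, ⟨c3, hb3⟩], ?_, ?_⟩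
      · intro i j hij
        fin_cases i <;> fin_cases j <;>
          simp only [Fin.isValue, Matrix.cons_val_zero, Matrix.cons_val_one, Matrix.head_cons,
            Matrix.cons_val_two, Matrix.tail_cons, Matrix.cons_val_three, Fin.mk_lt_mk,
            show ((⟨0, by omega⟩ : Fin 4) = 0) from rfl, show ((⟨1, by omega⟩ : Fin 4) = 1) from rfl,
            show ((⟨2, by omega⟩ : Fin 4) = 2) from rfl, show ((⟨3, by omega⟩ : Fin 4) = 3) from rfl] <;>
          first
            | exact absurd hij (by decide)
            | omega
      · intro j k
        fin_cases j <;> fin_cases k <;>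
          simp only [Fin.isValue, Matrix.cons_val_zero, Matrix.cons_val_one, Matrix.head_cons,
            Matrix.cons_val_two, Matrix.tail_cons, Matrix.cons_val_three,
            show ((⟨0, by omega⟩ : Fin 4) = 0) from rfl, show ((⟨1, by omega⟩ : Fin 4) = 1) from rfl,
            show ((⟨2, by omega⟩ : Fin 4) = 2) from rfl, show ((⟨3, by omega⟩ : Fin 4) = 3) from rfl] <;>
          first
            | (refine iff_of_true (by decide) ?_; rw [Fin.lt_def]; omega)
            | (refine iff_of_false (by decide) ?_; rw [Fin.lt_def]; omega)
    have h31 : ¬ Pat3142 (dPermRows ![1, π] 1) 0 n := by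
      rintro ⟨c0, c1, c2, c3, _, hc01, hc12, hc23, hc3n, p1, p2, p3⟩
      apply h2
      have hb0 : c0 < n := by omega
      have hb1 : c1 < n := by omega
      have hb2 : c2 < n := by omega
      have hb3 : c3 < n := by omega
      rw [hrow c1 hb1, hrow c3 hb3] at p1
      rw [hrow c3 hb3, hrow c0 hb0] at p2
      rw [hrow c0 hb0, hrow c2 hb2] at p3
      refine ⟨![⟨c0, hb0⟩, ⟨c1, hb1⟩, ⟨c2, hb2⟩, ⟨c3, hb3⟩], ?_, ?_⟩
      · intro i j hij
        fin_cases i <;> fin_cases j <;>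
          simp only [Fin.isValue, Matrix.cons_val_zero, Matrix.cons_val_one, Matrix.head_cons,
            Matrix.cons_val_two, Matrix.tail_cons, Matrix.cons_val_three, Fin.mk_lt_mk,
            show ((⟨0, by omega⟩ : Fin 4) = 0) from rfl, show ((⟨1, by omega⟩ : Fin 4) = 1) from rfl,
            show ((⟨2, by omega⟩ : Fin 4) = 2) from rfl, show ((⟨3, by omega⟩ : Fin 4) = 3) from rfl] <;>
          first
            | exact absurd hij (by decide)
            | omega
      · intro j k
        fin_cases j <;> fin_cases k <;>
          simp only [Fin.isValue, Matrix.cons_val_zero, Matrix.cons_val_one, Matrix.head_cons,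
            Matrix.cons_val_two, Matrix.tail_cons, Matrix.cons_val_three,
            show ((⟨0, by omega⟩ : Fin 4) = 0) from rfl, show ((⟨1, by omega⟩ : Fin 4) = 1) from rfl,
            show ((⟨2, by omega⟩ : Fin 4) = 2) from rfl, show ((⟨3, by omega⟩ : Fin 4) = 3) from rfl] <;>
          first
            | (refine iff_of_true (by decide) ?_; rw [Fin.lt_def]; omega)
            | (refine iff_of_false (by decide) ?_; rw [Fin.lt_def]; omega)
    refine sep_build (dPermRows ![1, π]) n 0 n (by omega) (by omega) ?_ inj h24 h31
    intro j1 j2 hj hj2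
    rw [hrow0 j1 (by omega), hrow0 j2 hj2]
    exact hj
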